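/- Let X be an I-continuous T0 space such that ↡_I E is irreducible for every irreducible subset E of X (where ↡_I E = ⋃_{e ∈ E} ↡_I e). Then the relation ≪_I has the interpolation property: whenever x ≪_I z, there exists y ∈ X with x ≪_I y and y ≪_I z. -/
import Mathlib


universe u

/-- The specialisation order of a topological space: `x ≤ y` iff `x ∈ closure {y}`. -/
def sle {X : Type u} [TopologicalSpace X] (x y : X) : Prop :=
  x ∈ closure ({y} : Set X)

/-- Upper bounds with respect to the specialisation order. -/
def sUB {X : Type u} [TopologicalSpace X] (A : Set X) : Set X :=
  {u | ∀ a ∈ A, sle a u}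

/-- `s` is the least upper bound of `A` with respect to the specialisation order. -/
def sIsLUB {X : Type u} [TopologicalSpace X] (A : Set X) (s : X) : Prop :=
  s ∈ sUB A ∧ ∀ u ∈ sUB A, sle s u

/-- `x ≪_I y`: for every irreducible set `E` having a supremum above `y`,
some element of `E` is above `x`. -/
def IBelow {X : Type u} [TopologicalSpace X] (x y : X) : Prop :=
  ∀ E : Set X, IsIrreducible E → ∀ s : X, sIsLUB E s → sle y s → ∃ e ∈ E, sle x e

/-- `X` is I-continuous: for every `y`, the set `↡_I y` is irreducible with
least upper bound `y`. -/
def IContinuous (X : Type u) [TopologicalSpace X] : Prop :=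
  ∀ y : X, IsIrreducible {x | IBelow x y} ∧ sIsLUB {x | IBelow x y} y

/-- `X` is I-stable: `↟_I U` is open for every open `U`. -/
def IStable (X : Type u) [TopologicalSpace X] : Prop :=
  ∀ U : Set X, IsOpen U → IsOpen {x : X | ∃ a ∈ U, IBelow a x}

/-- `X` is sup-sober: every closed irreducible set with a supremum is the closure
of that supremum. -/
def SupSober (X : Type u) [TopologicalSpace X] : Prop :=
  ∀ F : Set X, IsClosed F → IsIrreducible F → ∀ s : X, sIsLUB F s → F = closure ({s} : Set X)

/-- The collection σ_I: upper sets (w.r.t. specialisation) inaccessible by suprema of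
irreducible sets. -/
def sigmaI (X : Type u) [TopologicalSpace X] : Set (Set X) :=
  {U | (∀ a ∈ U, ∀ b : X, sle a b → b ∈ U) ∧
       ∀ E : Set X, IsIrreducible E → ∀ s : X, sIsLUB E s → s ∈ U → (U ∩ E).Nonempty}

/-- The irreducibly derived topology τ_SI: open sets inaccessible by suprema of
irreducible sets. -/
def tauSI (X : Type u) [TopologicalSpace X] : Set (Set X) :=
  {U | IsOpen U ∧ ∀ E : Set X, IsIrreducible E → ∀ s : X, sIsLUB E s → s ∈ U → (E ∩ U).Nonempty}

/-- The net `x` I-converges to `y`: there is an irreducible set `E` with a supremum above `y`,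
all of whose elements are eventual lower bounds of the net. -/
def IConv {X : Type u} [TopologicalSpace X] {ι : Type u} [Preorder ι]
    (x : ι → X) (y : X) : Prop :=
  ∃ E : Set X, IsIrreducible E ∧
    (∀ e ∈ E, ∃ i₀ : ι, ∀ i : ι, i₀ ≤ i → sle e (x i)) ∧
    ∃ s : X, sIsLUB E s ∧ sle y s

/-- `D` is directed with respect to the specialisation order. -/
def sDirectedOn {X : Type u} [TopologicalSpace X] (D : Set X) : Prop :=
  ∀ a ∈ D, ∀ b ∈ D, ∃ c ∈ D, sle a c ∧ sle b c

/-- Way-below in the specialisation poset, via nonempty directed sets. -/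
def sWayBelow {X : Type u} [TopologicalSpace X] (x y : X) : Prop :=
  ∀ D : Set X, D.Nonempty → sDirectedOn D → ∀ s : X, sIsLUB D s → sle y s → ∃ d ∈ D, sle x d

/-- `X` is a DI space: the supremum of any irreducible set is also attained as the supremum
of a nonempty directed subset of its lower closure. -/
def DISpace (X : Type u) [TopologicalSpace X] : Prop :=
  ∀ E : Set X, IsIrreducible E → ∀ s : X, sIsLUB E s →
    ∃ D : Set X, D.Nonempty ∧ sDirectedOn D ∧ (∀ d ∈ D, ∃ e ∈ E, sle d e) ∧ sIsLUB D s

/-- `U` is τ_I-open: every net that I-converges to a point of `U` is eventually in `U`. -/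
def TauIOpen {X : Type u} [TopologicalSpace X] (U : Set X) : Prop :=
  ∀ (ι : Type u) [Preorder ι] [Nonempty ι],
    (∀ i j : ι, ∃ k : ι, i ≤ k ∧ j ≤ k) →
    ∀ x : ι → X, ∀ y ∈ U, IConv x y →
    ∃ i₀ : ι, ∀ i : ι, i₀ ≤ i → x i ∈ U


lemma sle_refl' {X : Type u} [TopologicalSpace X] (x : X) : sle x x :=
  subset_closure rfl

lemma sle_trans' {X : Type u} [TopologicalSpace X] {x y z : X}
    (h1 : sle x y) (h2 : sle y z) : sle x z := by
  have : closure ({y} : Set X) ⊆ closure ({z} : Set X) :=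
    closure_minimal (Set.singleton_subset_iff.mpr h2) isClosed_closure
  exact this h1

lemma sle_of_IBelow {X : Type u} [TopologicalSpace X] (hcont : IContinuous X)
    {x y : X} (h : IBelow x y) : sle x y := by
  obtain ⟨hirr, hlub⟩ := hcont y
  obtain ⟨e, he, hxe⟩ := h _ hirr y hlub (sle_refl' y)
  exact sle_trans' hxe (hlub.1 e he)

lemma IBelow_of_sle {X : Type u} [TopologicalSpace X] {x x' y : X}
    (h : sle x x') (h' : IBelow x' y) : IBelow x y := by
  intro E hE s hs hys
  obtain ⟨e, he, h2⟩ := h' E hE s hs hys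
  exact ⟨e, he, sle_trans' h h2⟩

/-- If `X` is I-continuous and `↡_I` preserves irreducibility, then `≪_I` interpolates. -/
theorem stmt12 {X : Type u} [TopologicalSpace X] [T0Space X]
    (hcont : IContinuous X)
    (hpres : ∀ E : Set X, IsIrreducible E → IsIrreducible {x : X | ∃ e ∈ E, IBelow x e})
    (x z : X) (hxz : IBelow x z) :
    ∃ y : X, IBelow x y ∧ IBelow y z := by
  set E : Set X := {a : X | ∃ e ∈ {x | IBelow x z}, IBelow a e} with hE
  have hirrz := (hcont z).1
  have hlubz := (hcont z).2
  have hEirr : IsIrreducible E := hpres _ hirrz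
  have hElub : sIsLUB E z := by
    constructor
    · intro a ⟨y, hy, hay⟩
      exact sle_trans' (sle_of_IBelow hcont hay) (sle_of_IBelow hcont hy)
    · intro u hu
      apply hlubz.2
      intro y hy
      have : sIsLUB {x | IBelow x y} y := (hcont y).2
      apply this.2
      intro a ha
      exact hu a ⟨y, hy, ha⟩
  obtain ⟨e, ⟨y, hy, hey⟩, hxe⟩ := hxz E hEirr z hElub (sle_refl' z)
  exact ⟨y, IBelow_of_sle hxe hey, hy⟩
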